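/- Suppose $J_1, J_2 \ge J_c$ with $J_1 < J_2$, where $\tanh(J_c)=1/2$, and let $t_J \ge 0$ denote the largest fixed point of $f_J(t)=\log(\cosh(J+t)/\cosh(t-J))$ (with $t_{J_c}=0$). Then $t_{J_2} - J_2 \ge t_{J_1} - J_1$ and $t_{J_2} + J_2 \ge t_{J_1} + J_1$. -/
import Mathlib

lemma aux_bound (J t : ℝ) (hJ : 0 ≤ J) :
    Real.log (Real.cosh (J + t) / Real.cosh (t - J)) ≤ 2 * J := by
  have hB : (0:ℝ) < Real.cosh (t - J) := Real.cosh_pos _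
  have hA : Real.cosh (J + t) ≤ Real.exp (2*J) * Real.cosh (t - J) := by
    rw [Real.cosh_eq, Real.cosh_eq]
    have h1 : Real.exp (2*J) * Real.exp (t-J) = Real.exp (J+t) := by
      rw [← Real.exp_add]; ring_nf
    have h2 : Real.exp (-(J+t)) ≤ Real.exp (2*J) * Real.exp (-(t-J)) := by
      rw [← Real.exp_add]; exact Real.exp_le_exp.2 (by linarith)
    nlinarith [Real.exp_pos (J+t)]
  rw [Real.log_le_iff_le_exp (div_pos (Real.cosh_pos _) hB)]
  rw [div_le_iff₀ hB]
  linarith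

lemma aux_alg (u v a w : ℝ) (hv : 0 < v) (ha : 1 ≤ a)
    (hwv : w * (a*a) = v) (h3 : 3*v ≤ u) : a * ((u+v)/2) ≤ (u*(a*a) + w)/2 := by
  have ha0 : 0 < a := by linarith
  have h3a : 0 ≤ 3*a^3 - a^2 - a - 1 := by nlinarith [sq_nonneg (a-1), sq_nonneg a]
  nlinarith [mul_nonneg (mul_nonneg hv.le (sub_nonneg.2 ha)) h3a,
    mul_nonneg (sub_nonneg.2 h3) (mul_nonneg (mul_nonneg (mul_nonneg ha0.le ha0.le) ha0.le) (sub_nonneg.2 ha)),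
    mul_pos ha0 ha0, sq_nonneg (a-1)]

lemma aux_key (x d : ℝ) (hd : 0 ≤ d) (hx : 3 ≤ Real.exp (2*x)) :
    Real.exp d * Real.cosh x ≤ Real.cosh (x + 2*d) := by
  rw [Real.cosh_eq, Real.cosh_eq]
  have e1 : Real.exp (x + 2*d) = Real.exp x * (Real.exp d * Real.exp d) := by
    rw [← Real.exp_add, ← Real.exp_add]; ring_nf
  have e2 : Real.exp (-(x + 2*d)) * (Real.exp d * Real.exp d) = Real.exp (-x) := by
    rw [← Real.exp_add, ← Real.exp_add]; ring_nf
  have h3 : 3 * Real.exp (-x) ≤ Real.exp x := by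
    have h := Real.exp_pos (-x)
    have : Real.exp (2*x) * Real.exp (-x) = Real.exp x := by
      rw [← Real.exp_add]; ring_nf
    nlinarith
  have := aux_alg (Real.exp x) (Real.exp (-x)) (Real.exp d) (Real.exp (-(x+2*d)))
    (Real.exp_pos _) (Real.one_le_exp hd) e2 h3
  rw [e1]; linarith

theorem stmt_14 (Jc : ℝ) (hJc : Real.tanh Jc = 1/2)
    (J1 J2 : ℝ) (h1 : Jc ≤ J1) (h12 : J1 < J2)
    (t1 t2 : ℝ) (ht1nn : 0 ≤ t1) (ht2nn : 0 ≤ t2)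
    (ht1 : IsGreatest {s : ℝ | Real.log (Real.cosh (J1 + s) / Real.cosh (s - J1)) = s} t1)
    (ht2 : IsGreatest {s : ℝ | Real.log (Real.cosh (J2 + s) / Real.cosh (s - J2)) = s} t2) :
    t1 - J1 ≤ t2 - J2 ∧ t1 + J1 ≤ t2 + J2 := by
  -- exp(2 Jc) = 3
  have e3 : Real.exp (2*Jc) = 3 := by
    rw [Real.tanh_eq_sinh_div_cosh, Real.sinh_eq, Real.cosh_eq,
      div_eq_div_iff (ne_of_gt (by positivity)) (by norm_num : (2:ℝ) ≠ 0)] at hJc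
    have h1 : Real.exp Jc * Real.exp (-Jc) = 1 := by rw [← Real.exp_add]; simp
    have h2 : Real.exp (2*Jc) = Real.exp Jc * Real.exp Jc := by
      rw [← Real.exp_add]; ring_nf
    nlinarith [Real.exp_pos Jc, Real.exp_pos (-Jc)]
  have hJcpos : 0 < Jc := by
    by_contra h
    push_neg at h
    have : Real.exp (2*Jc) ≤ Real.exp 0 := Real.exp_le_exp.2 (by linarith)
    rw [Real.exp_zero] at this; linarith
  have hJ1pos : 0 < J1 := lt_of_lt_of_le hJcpos h1
  have hJ2pos : 0 < J2 := lt_trans hJ1pos h12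
  set d := J2 - J1 with hd
  have hdpos : 0 < d := by simp [hd]; linarith
  set s0 := t1 + d with hs0
  -- fixed point equation for t1
  have hB1 : (0:ℝ) < Real.cosh (t1 - J1) := Real.cosh_pos _
  have hfix1 : Real.cosh (J1 + t1) = Real.exp t1 * Real.cosh (t1 - J1) := by
    have h := ht1.1
    simp only [Set.mem_setOf_eq] at h
    have := Real.exp_log (div_pos (Real.cosh_pos (J1+t1)) hB1)
    rw [h] at this
    field_simp at this ⊢
    linarith
  -- key: cosh (J2 + s0) ≥ exp s0 * cosh (s0 - J2)
  have hx3 : 3 ≤ Real.exp (2*(J1+t1)) := by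
    rw [← e3]; exact Real.exp_le_exp.2 (by linarith)
  have hkey := aux_key (J1+t1) d hdpos.le hx3
  have hsub1 : s0 - J2 = t1 - J1 := by simp [hs0, hd]; ring
  have hadd1 : J2 + s0 = (J1+t1) + 2*d := by simp [hs0, hd]; ring
  have hexps0 : Real.exp s0 = Real.exp t1 * Real.exp d := by
    rw [← Real.exp_add]
  have hmain : Real.exp s0 * Real.cosh (s0 - J2) ≤ Real.cosh (J2 + s0) := by
    rw [hsub1, hadd1, hexps0]
    calc Real.exp t1 * Real.exp d * Real.cosh (t1-J1)
        = Real.exp d * (Real.exp t1 * Real.cosh (t1-J1)) := by ring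
      _ = Real.exp d * Real.cosh (J1+t1) := by rw [← hfix1]
      _ ≤ _ := hkey
  -- IVT for g(s) = f_{J2}(s) - s on [s0, 2*J2+1]
  have hc : Continuous (fun s => Real.log (Real.cosh (J2 + s) / Real.cosh (s - J2)) - s) := by
    apply Continuous.sub _ continuous_id
    have hq : Continuous (fun s => Real.cosh (J2 + s) / Real.cosh (s - J2)) :=
      Continuous.div (by fun_prop) (by fun_prop) (fun s => (Real.cosh_pos _).ne')
    exact hq.log (fun s => ne_of_gt (div_pos (Real.cosh_pos _) (Real.cosh_pos _)))
  have hgs0 : s0 ≤ Real.log (Real.cosh (J2 + s0) / Real.cosh (s0 - J2)) := by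
    rw [Real.le_log_iff_exp_le (div_pos (Real.cosh_pos _) (Real.cosh_pos _)),
      le_div_iff₀ (Real.cosh_pos _)]
    exact hmain
  have hgb : Real.log (Real.cosh (J2 + (2*J2+1)) / Real.cosh ((2*J2+1) - J2)) ≤ 2*J2 :=
    aux_bound J2 (2*J2+1) hJ2pos.le
  have ht1le : t1 ≤ 2*J1 := by
    have h := ht1.1
    simp only [Set.mem_setOf_eq] at h
    have := aux_bound J1 t1 hJ1pos.le
    linarith [h ▸ this]
  have hs0b : s0 ≤ 2*J2 + 1 := by
    have : s0 = t1 + (J2 - J1) := rfl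
    linarith
  have hiv := intermediate_value_Icc' hs0b hc.continuousOn
  have h0mem : (0:ℝ) ∈ Set.Icc
      (Real.log (Real.cosh (J2 + (2*J2+1)) / Real.cosh ((2*J2+1) - J2)) - (2*J2+1))
      (Real.log (Real.cosh (J2 + s0) / Real.cosh (s0 - J2)) - s0) :=
    ⟨by linarith, by linarith⟩
  obtain ⟨s, hsmem, hgs⟩ := hiv h0mem
  have hsfix : s ∈ {s : ℝ | Real.log (Real.cosh (J2 + s) / Real.cosh (s - J2)) = s} := by
    simp only [Set.mem_setOf_eq]
    have : Real.log (Real.cosh (J2 + s) / Real.cosh (s - J2)) - s = 0 := hgs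
    linarith
  have hst2 : s ≤ t2 := ht2.2 hsfix
  have hs0s : s0 ≤ s := hsmem.1
  have hs0eq : s0 = t1 + (J2 - J1) := rfl
  constructor <;> linarith
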